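/- ∫_0^1 ln(1+x) ln(1−x) dx = (ln 2)² − 2 ln 2 + 2 − π²/6. -/

import Mathlib

open MeasureTheory Real Set

lemma aux_neg_log_le {x : ℝ} (hx : 0 < x) : -Real.log x ≤ 2 * x ^ (-(1/2) : ℝ) := by
  have h2 : (0:ℝ) < x ^ ((1:ℝ)/2) := Real.rpow_pos_of_pos hx _
  have h1 : -Real.log x = 2 * (-Real.log (x ^ ((1:ℝ)/2))) := by
    rw [Real.log_rpow hx]; ring
  have h3 : -Real.log (x ^ ((1:ℝ)/2)) ≤ (x ^ ((1:ℝ)/2))⁻¹ := by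
    have := Real.log_le_sub_one_of_pos (inv_pos.2 h2)
    rw [Real.log_inv] at this; linarith [inv_pos.2 h2]
  have h4 : (x ^ ((1:ℝ)/2))⁻¹ = x ^ (-(1/2) : ℝ) := by
    rw [← Real.rpow_neg hx.le]
  rw [h1, ← h4]; linarith

lemma integrableOn_log_Ioo : IntegrableOn Real.log (Set.Ioo (0:ℝ) 1) := by
  have hb : IntegrableOn (fun x : ℝ => 2 * x ^ (-(1/2):ℝ)) (Set.Ioo (0:ℝ) 1) := by
    have h := (intervalIntegral.intervalIntegrable_rpow' (a := 0) (b := 1)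
      (r := -(1/2)) (by norm_num))
    have h2 : IntegrableOn (fun x : ℝ => x ^ (-(1/2):ℝ)) (Set.Ioc (0:ℝ) 1) := by
      rwa [intervalIntegrable_iff_integrableOn_Ioc_of_le (by norm_num)] at h
    exact (h2.mono_set Ioo_subset_Ioc_self).const_mul 2
  apply hb.integrable.mono Real.measurable_log.aestronglyMeasurable
  filter_upwards [ae_restrict_mem measurableSet_Ioo] with x hx
  have hx0 := hx.1
  have hx1 := hx.2
  have hlog : Real.log x ≤ 0 := Real.log_nonpos hx0.le hx1.le
  have hrp : (0:ℝ) ≤ x ^ (-(1/2):ℝ) := (Real.rpow_pos_of_pos hx0 _).le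
  rw [Real.norm_eq_abs, abs_of_nonpos hlog, Real.norm_eq_abs, abs_of_nonneg (by linarith)]
  exact aux_neg_log_le hx0

lemma integrableOn_pow_neg_log (n : ℕ) {a : ℝ} (ha : 0 < a) (ha1 : a ≤ 1) :
    IntegrableOn (fun x : ℝ => x ^ n * (-Real.log x)) (Set.Ioo (0:ℝ) a) := by
  have hsub : Set.Ioo (0:ℝ) a ⊆ Set.Ioo (0:ℝ) 1 := Set.Ioo_subset_Ioo le_rfl ha1
  have hlog : IntegrableOn Real.log (Set.Ioo (0:ℝ) a) := integrableOn_log_Ioo.mono_set hsub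
  apply hlog.integrable.mono
  · exact ((measurable_id.pow_const n).mul Real.measurable_log.neg).aestronglyMeasurable
  · filter_upwards [ae_restrict_mem measurableSet_Ioo] with x hx
    have hx0 := hx.1
    have hx1 : x ≤ 1 := hx.2.le.trans ha1
    rw [Real.norm_eq_abs, Real.norm_eq_abs, abs_mul, abs_neg, abs_pow]
    have hxa : |x| = x := abs_of_pos hx0
    calc |x| ^ n * |Real.log x| ≤ 1 ^ n * |Real.log x| := by
          apply mul_le_mul_of_nonneg_right _ (abs_nonneg _)
          exact pow_le_pow_left₀ (abs_nonneg _) (by rw [hxa]; exact hx1) n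
      _ = |Real.log x| := by rw [one_pow, one_mul]

lemma integral_pow_neg_log (n : ℕ) {a : ℝ} (ha : 0 < a) (ha1 : a ≤ 1) :
    ∫ x in Set.Ioo (0:ℝ) a, x ^ n * (-Real.log x)
      = a ^ (n+1) * (-Real.log a) / (n+1) + a ^ (n+1) / ((n+1:ℝ)^2) := by
  set F : ℝ → ℝ := fun x => -(x ^ n * (x * Real.log x)) / (n+1) + x ^ (n+1) / ((n+1:ℝ)^2)
    with hFdef
  have hcont : ContinuousOn F (Set.Icc 0 a) := by
    apply Continuous.continuousOn
    exact (((continuous_pow n).mul Real.continuous_mul_log).neg.div_const _).add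
      ((continuous_pow (n+1)).div_const _)
  have hderiv : ∀ x ∈ Set.Ioo (0:ℝ) a, HasDerivAt F (x ^ n * (-Real.log x)) x := by
    intro x hx
    have hx0 : x ≠ 0 := ne_of_gt hx.1
    have h1 : HasDerivAt (fun x : ℝ => x ^ n * (x * Real.log x))
        ((n : ℝ) * x ^ (n-1) * (x * Real.log x) + x ^ n * (Real.log x + 1)) x :=
      (hasDerivAt_pow n x).mul (Real.hasDerivAt_mul_log hx0)
    have h2 : HasDerivAt (fun x : ℝ => x ^ (n+1)) (((n:ℝ)+1) * x ^ n) x := by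
      simpa using hasDerivAt_pow (n+1) x
    have := ((h1.neg.div_const ((n:ℝ)+1)).add (h2.div_const (((n:ℝ)+1)^2)))
    refine this.congr_deriv ?_
    have hn : ((n:ℝ)+1) ≠ 0 := by positivity
    rcases Nat.eq_zero_or_pos n with h | h
    · subst h; field_simp; push_cast; ring
    · have hxp : (n:ℝ) * x ^ (n-1) * (x * Real.log x) = (n:ℝ) * x ^ n * Real.log x := by
        rw [show x ^ n = x ^ (n - 1 + 1) by rw [Nat.sub_add_cancel h]]
        ring
      rw [hxp]; field_simp; ring
  have hint : IntervalIntegrable (fun x : ℝ => x ^ n * (-Real.log x)) volume 0 a := by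
    rw [intervalIntegrable_iff_integrableOn_Ioc_of_le ha.le]
    exact (integrableOn_pow_neg_log n ha ha1).congr_set_ae Ioo_ae_eq_Ioc.symm
  have key := intervalIntegral.integral_eq_sub_of_hasDeriv_right_of_le ha.le hcont
    (fun x hx => (hderiv x hx).hasDerivWithinAt) hint
  rw [intervalIntegral.integral_of_le ha.le, integral_Ioc_eq_integral_Ioo] at key
  rw [key, hFdef]
  simp only [Real.log_zero, mul_zero, zero_mul, zero_pow (Nat.succ_ne_zero n), zero_div,
    ne_eq, pow_eq_zero_iff, neg_zero, zero_add, add_zero, sub_zero]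
  have : -(a ^ n * (a * Real.log a)) / (↑n + 1) = a ^ (n+1) * (-Real.log a) / (↑n+1) := by
    ring
  rw [this]

lemma summable_half_pow : Summable (fun n : ℕ => (1/2:ℝ)^(n+1)) := by
  have h : (fun n : ℕ => (1/2:ℝ)^(n+1)) = fun n => (1/2:ℝ) * (1/2:ℝ)^n := by
    funext n; rw [pow_succ]; ring
  rw [h]
  exact (summable_geometric_of_lt_one (by norm_num) (by norm_num)).mul_left _

lemma summable_Lser : Summable (fun n : ℕ => (1/2:ℝ)^(n+1) / ((n+1:ℝ)^2)) := by
  apply Summable.of_nonneg_of_le (fun n => by positivity) (fun n => ?_) summable_half_pow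
  apply div_le_self (by positivity)
  nlinarith [Nat.cast_nonneg (α := ℝ) n]

noncomputable def Lhalf : ℝ := ∑' n : ℕ, (1/2:ℝ)^(n+1) / ((n+1:ℝ)^2)

lemma hasSum_Lser : HasSum (fun n : ℕ => (1/2:ℝ)^(n+1) / ((n+1:ℝ)^2)) Lhalf :=
  summable_Lser.hasSum

lemma hasSum_h1 : HasSum (fun n : ℕ => (1/2:ℝ)^(n+1) / ((n+1:ℝ))) (Real.log 2) := by
  have h := hasSum_pow_div_log_of_abs_lt_one (x := (1/2:ℝ)) (by rw [abs_of_pos] <;> norm_num)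
  norm_num at h
  convert h using 1
  rw [one_div, Real.log_inv, neg_neg]

lemma hasSum_h2 : HasSum (fun n : ℕ => (1/2:ℝ)^(n+1) / ((n+2:ℝ))) (2 * Real.log 2 - 1) := by
  have h := (hasSum_nat_add_iff' (f := fun n : ℕ => (1/2:ℝ)^(n+1) / ((n+1:ℝ))) 1).2 hasSum_h1
  norm_num at h
  have h2 := h.mul_left 2
  have hf : (fun n : ℕ => (1/2:ℝ)^(n+1) / ((n+2:ℝ)))
      = fun n : ℕ => 2 * ((1/2:ℝ)^(n+1+1) / ((n:ℝ)+1+1)) := by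
    funext n; rw [pow_succ]; ring
  rw [hf, show 2*Real.log 2 - 1 = 2*(Real.log 2 - 1/2) by ring]
  exact h2

lemma hasSum_h3 : HasSum (fun n : ℕ => (1/2:ℝ)^(n+1) / ((n+2:ℝ)^2)) (2 * Lhalf - 1) := by
  have h := (hasSum_nat_add_iff' (f := fun n : ℕ => (1/2:ℝ)^(n+1) / ((n+1:ℝ)^2)) 1).2 hasSum_Lser
  norm_num at h
  have h2 := h.mul_left 2
  have hf : (fun n : ℕ => (1/2:ℝ)^(n+1) / ((n+2:ℝ)^2))
      = fun n : ℕ => 2 * ((1/2:ℝ)^(n+1+1) / ((n:ℝ)+1+1)^2) := by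
    funext n; rw [pow_succ]; ring
  rw [hf, show 2*Lhalf - 1 = 2*(Lhalf - 1/2) by ring]
  exact h2

lemma hasSum_S : HasSum (fun n : ℕ => (1/2:ℝ)^(n+1) / (((n+1:ℝ)) * ((n+2:ℝ))^2))
    (2 - Real.log 2 - 2 * Lhalf) := by
  have h := (hasSum_h1.sub hasSum_h2).sub hasSum_h3
  have hf : (fun n : ℕ => (1/2:ℝ)^(n+1) / (((n+1:ℝ)) * ((n+2:ℝ))^2))
      = fun n : ℕ => (1/2:ℝ)^(n+1) / ((n+1:ℝ)) - (1/2:ℝ)^(n+1) / ((n+2:ℝ))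
          - (1/2:ℝ)^(n+1) / ((n+2:ℝ)^2) := by
    funext n
    have hn1 : ((n:ℝ)+1) ≠ 0 := by positivity
    have hn2 : ((n:ℝ)+2) ≠ 0 := by positivity
    field_simp
    ring
  rw [hf, show 2 - Real.log 2 - 2*Lhalf
      = Real.log 2 - (2*Real.log 2 - 1) - (2*Lhalf - 1) by ring]
  exact h
-- pointwise series for (-log (1-x))/x
lemma hasSum_f {x : ℝ} (hx0 : 0 < x) (hx1 : x < 1) :
    HasSum (fun n : ℕ => x ^ n / ((n:ℝ)+1)) ((-Real.log (1-x)) / x) := by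
  have h := (hasSum_pow_div_log_of_abs_lt_one
    (x := x) (by rw [abs_of_pos hx0]; exact hx1)).div_const x
  have hf : (fun n : ℕ => x ^ (n+1) / ((n:ℝ)+1) / x) = fun n : ℕ => x ^ n / ((n:ℝ)+1) := by
    funext n
    rw [pow_succ]
    field_simp
  rwa [hf] at h

-- integral of x^n / (n+1) over Ioo 0 a
lemma integral_pow_div (n : ℕ) {a : ℝ} (ha : 0 < a) :
    ∫ x in Set.Ioo (0:ℝ) a, x ^ n / ((n:ℝ)+1) = a ^ (n+1) / ((n:ℝ)+1)^2 := by
  rw [← integral_Ioc_eq_integral_Ioo, ← intervalIntegral.integral_of_le ha.le,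
    intervalIntegral.integral_div, integral_pow]
  have hn : ((n:ℝ)+1) ≠ 0 := by positivity
  field_simp
  ring

lemma integrableOn_pow_div (n : ℕ) {a : ℝ} (ha : 0 ≤ a) :
    IntegrableOn (fun x : ℝ => x ^ n / ((n:ℝ)+1)) (Set.Ioo (0:ℝ) a) := by
  have h := ((continuous_pow n).div_const ((n:ℝ)+1)).intervalIntegrable (μ := volume) 0 a
  rw [intervalIntegrable_iff_integrableOn_Ioc_of_le ha] at h
  exact h.mono_set Set.Ioo_subset_Ioc_self

lemma P_left : ∫ x in Set.Ioo (0:ℝ) (1/2), (-Real.log (1-x)) / x = Lhalf := by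
  have hnorm : ∀ n : ℕ, ∫ x in Set.Ioo (0:ℝ) (1/2), ‖x ^ n / ((n:ℝ)+1)‖
      = (1/2:ℝ)^(n+1) / ((n+1:ℝ)^2) := by
    intro n
    rw [← integral_pow_div n (by norm_num : (0:ℝ) < 1/2)]
    apply setIntegral_congr_fun measurableSet_Ioo
    intro x hx
    have : (0:ℝ) ≤ x ^ n / ((n:ℝ)+1) := div_nonneg (pow_nonneg hx.1.le n) (by positivity)
    exact Real.norm_of_nonneg this
  have key := integral_tsum_of_summable_integral_norm
    (F := fun (n : ℕ) (x : ℝ) => x ^ n / ((n:ℝ)+1))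
    (μ := volume.restrict (Set.Ioo (0:ℝ) (1/2)))
    (fun n => integrableOn_pow_div n (by norm_num))
    (by rw [funext hnorm]; exact summable_Lser)
  have hL : ∑' n : ℕ, ∫ x in Set.Ioo (0:ℝ) (1/2), x ^ n / ((n:ℝ)+1) = Lhalf := by
    rw [Lhalf]
    congr 1
    funext n
    rw [integral_pow_div n (by norm_num : (0:ℝ) < 1/2)]
  rw [← hL, key]
  apply setIntegral_congr_fun measurableSet_Ioo
  intro x hx
  exact ((hasSum_f hx.1 (lt_trans hx.2 (by norm_num))).tsum_eq).symm

lemma hasSum_zeta1 : HasSum (fun n : ℕ => 1/((n:ℝ)+1)^2) (π^2/6) := by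
  have h := (hasSum_nat_add_iff' (f := fun n : ℕ => 1/(n:ℝ)^2) 1).2 hasSum_zeta_two
  norm_num at h
  have hf : (fun n : ℕ => 1/((n:ℝ)+1)^2) = fun n : ℕ => 1/((((n+1):ℕ)):ℝ)^2 := by
    funext n; push_cast; ring
  rw [hf]
  convert h using 2 with n
  exacts [rfl, by push_cast; ring]

lemma P_full : ∫ x in Set.Ioo (0:ℝ) 1, (-Real.log (1-x)) / x = π^2/6 := by
  have hnorm : ∀ n : ℕ, ∫ x in Set.Ioo (0:ℝ) 1, ‖x ^ n / ((n:ℝ)+1)‖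
      = 1 / ((n:ℝ)+1)^2 := by
    intro n
    have h := integral_pow_div n (by norm_num : (0:ℝ) < 1)
    rw [one_pow] at h
    rw [← h]
    apply setIntegral_congr_fun measurableSet_Ioo
    intro x hx
    exact Real.norm_of_nonneg (div_nonneg (pow_nonneg hx.1.le n) (by positivity))
  have key := integral_tsum_of_summable_integral_norm
    (F := fun (n : ℕ) (x : ℝ) => x ^ n / ((n:ℝ)+1))
    (μ := volume.restrict (Set.Ioo (0:ℝ) 1))
    (fun n => integrableOn_pow_div n (by norm_num))
    (by rw [funext hnorm]; exact hasSum_zeta1.summable)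
  have hL : ∑' n : ℕ, ∫ x in Set.Ioo (0:ℝ) 1, x ^ n / ((n:ℝ)+1) = π^2/6 := by
    rw [show (∑' n : ℕ, ∫ x in Set.Ioo (0:ℝ) 1, x ^ n / ((n:ℝ)+1))
        = ∑' n : ℕ, 1/((n:ℝ)+1)^2 by
      congr 1; funext n
      have h := integral_pow_div n (by norm_num : (0:ℝ) < 1)
      rw [one_pow] at h; exact h]
    exact hasSum_zeta1.tsum_eq
  rw [← hL, key]
  apply setIntegral_congr_fun measurableSet_Ioo
  intro x hx
  exact ((hasSum_f hx.1 hx.2).tsum_eq).symm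

lemma meas_f : Measurable (fun x : ℝ => (-Real.log (1-x)) / x) := by
  exact ((Real.measurable_log.comp (measurable_const.sub measurable_id)).neg).div measurable_id

lemma int_left : IntervalIntegrable (fun x : ℝ => (-Real.log (1-x)) / x) volume 0 (1/2) := by
  rw [intervalIntegrable_iff_integrableOn_Ioc_of_le (by norm_num)]
  have hc : IntegrableOn (fun _ : ℝ => (2:ℝ)) (Set.Ioc (0:ℝ) (1/2)) :=
    integrableOn_const (by simp)
  apply hc.integrable.mono meas_f.aestronglyMeasurable
  filter_upwards [ae_restrict_mem measurableSet_Ioc] with x hx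
  have hx0 := hx.1
  have h1x : (0:ℝ) < 1 - x := by linarith [hx.2]
  have hlog : Real.log (1-x) ≤ 0 := Real.log_nonpos h1x.le (by linarith [hx.1])
  have h1 : -Real.log (1-x) ≤ x/(1-x) := by
    have h := Real.log_le_sub_one_of_pos (inv_pos.2 h1x)
    rw [Real.log_inv] at h
    have he : (1-x)⁻¹ - 1 = x/(1-x) := by field_simp; ring
    linarith [he ▸ h]
  have hnn : (0:ℝ) ≤ (-Real.log (1-x)) / x := div_nonneg (by linarith) hx0.le
  rw [Real.norm_of_nonneg hnn, Real.norm_of_nonneg (by norm_num : (0:ℝ) ≤ 2)]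
  calc (-Real.log (1-x)) / x ≤ (x/(1-x)) / x := by gcongr
    _ = 1/(1-x) := by field_simp
    _ ≤ 2 := by rw [div_le_iff₀ h1x]; linarith [hx.2]

lemma int_right_aux : IntervalIntegrable (fun u : ℝ => (-Real.log u) / (1-u)) volume 0 (1/2) := by
  rw [intervalIntegrable_iff_integrableOn_Ioc_of_le (by norm_num)]
  have hlogint : IntegrableOn (fun u : ℝ => 2 * (-Real.log u)) (Set.Ioc (0:ℝ) (1/2)) := by
    have h := (integrableOn_log_Ioo.mono_set
      (Set.Ioo_subset_Ioo le_rfl (by norm_num : (1/2:ℝ) ≤ 1))).congr_set_ae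
      (Ioo_ae_eq_Ioc (a := (0:ℝ)) (b := (1/2:ℝ))).symm
    exact h.neg.const_mul 2
  apply hlogint.integrable.mono
  · exact ((Real.measurable_log.neg).div (measurable_const.sub measurable_id)).aestronglyMeasurable
  · filter_upwards [ae_restrict_mem measurableSet_Ioc] with u hu
    have hu0 := hu.1
    have h1u : (0:ℝ) < 1 - u := by linarith [hu.2]
    have hlog : Real.log u ≤ 0 := Real.log_nonpos hu0.le (by linarith [hu.2])
    have hnn : (0:ℝ) ≤ (-Real.log u) / (1-u) := div_nonneg (by linarith) h1u.le
    rw [Real.norm_of_nonneg hnn, Real.norm_of_nonneg (by nlinarith : (0:ℝ) ≤ 2 * (-Real.log u))]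
    rw [div_le_iff₀ h1u]
    nlinarith [mul_nonneg (neg_nonneg.2 hlog) (by linarith [hu.2] : (0:ℝ) ≤ 1 - 2*u)]

lemma hasSum_t : HasSum (fun k : ℕ => (1/2:ℝ)^(k+1) * Real.log 2 / ((k:ℝ)+1)
    + (1/2:ℝ)^(k+1) / ((k:ℝ)+1)^2) ((Real.log 2)^2 + Lhalf) := by
  have h := (hasSum_h1.mul_left (Real.log 2)).add hasSum_Lser
  have hf : (fun k : ℕ => (1/2:ℝ)^(k+1) * Real.log 2 / ((k:ℝ)+1) + (1/2:ℝ)^(k+1) / ((k:ℝ)+1)^2)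
      = fun k : ℕ => Real.log 2 * ((1/2:ℝ)^(k+1) / ((k:ℝ)+1)) + (1/2:ℝ)^(k+1) / ((k:ℝ)+1)^2 := by
    funext k; ring
  rw [hf, show (Real.log 2)^2 + Lhalf = Real.log 2 * Real.log 2 + Lhalf by ring]
  exact h

lemma log_half : -Real.log (1/2 : ℝ) = Real.log 2 := by
  rw [one_div, Real.log_inv, neg_neg]

lemma Q_left : ∫ u in Set.Ioo (0:ℝ) (1/2), (-Real.log u) / (1-u)
    = (Real.log 2)^2 + Lhalf := by
  have hval : ∀ k : ℕ, ∫ u in Set.Ioo (0:ℝ) (1/2), u ^ k * (-Real.log u)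
      = (1/2:ℝ)^(k+1) * Real.log 2 / ((k:ℝ)+1) + (1/2:ℝ)^(k+1) / ((k:ℝ)+1)^2 := by
    intro k
    rw [integral_pow_neg_log k (by norm_num) (by norm_num), log_half]
  have hnorm : ∀ k : ℕ, ∫ u in Set.Ioo (0:ℝ) (1/2), ‖u ^ k * (-Real.log u)‖
      = (1/2:ℝ)^(k+1) * Real.log 2 / ((k:ℝ)+1) + (1/2:ℝ)^(k+1) / ((k:ℝ)+1)^2 := by
    intro k
    rw [← hval k]
    apply setIntegral_congr_fun measurableSet_Ioo
    intro u hu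
    have hlog : Real.log u ≤ 0 := Real.log_nonpos hu.1.le (by linarith [hu.2])
    exact Real.norm_of_nonneg (mul_nonneg (pow_nonneg hu.1.le k) (by linarith))
  have key := integral_tsum_of_summable_integral_norm
    (F := fun (k : ℕ) (u : ℝ) => u ^ k * (-Real.log u))
    (μ := volume.restrict (Set.Ioo (0:ℝ) (1/2)))
    (fun k => integrableOn_pow_neg_log k (by norm_num) (by norm_num))
    (by rw [funext hnorm]; exact hasSum_t.summable)
  have hL : ∑' k : ℕ, ∫ u in Set.Ioo (0:ℝ) (1/2), u ^ k * (-Real.log u)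
      = (Real.log 2)^2 + Lhalf := by
    rw [funext hval]; exact hasSum_t.tsum_eq
  rw [← hL, key]
  apply setIntegral_congr_fun measurableSet_Ioo
  intro u hu
  have hg := (hasSum_geometric_of_lt_one hu.1.le
    (by linarith [hu.2] : u < 1)).mul_right (-Real.log u)
  rw [inv_mul_eq_div] at hg
  exact hg.tsum_eq.symm

lemma P_right : ∫ x in Set.Ioo (1/2:ℝ) 1, (-Real.log (1-x)) / x
    = (Real.log 2)^2 + Lhalf := by
  have hcomp := intervalIntegral.integral_comp_sub_left (a := (0:ℝ)) (b := 1/2)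
      (fun y : ℝ => (-Real.log (1-y))/y) 1
  rw [show (1:ℝ)-1/2 = 1/2 by norm_num, show (1:ℝ)-0 = 1 by norm_num] at hcomp
  rw [← integral_Ioc_eq_integral_Ioo,
    ← intervalIntegral.integral_of_le (by norm_num : (1/2:ℝ) ≤ 1), ← hcomp]
  simp only [sub_sub_cancel]
  rw [intervalIntegral.integral_of_le (by norm_num : (0:ℝ) ≤ 1/2),
    integral_Ioc_eq_integral_Ioo]
  exact Q_left

lemma int_right : IntervalIntegrable (fun x : ℝ => (-Real.log (1-x)) / x) volume (1/2) 1 := by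
  have h := int_right_aux.comp_sub_left 1
  rw [show (1:ℝ)-1/2 = 1/2 by norm_num, show (1:ℝ)-0 = 1 by norm_num] at h
  simpa [sub_sub_cancel] using h.symm

lemma Lhalf_val : Lhalf = π^2/12 - (Real.log 2)^2/2 := by
  have hsplit : (π^2/6 : ℝ) = Lhalf + ((Real.log 2)^2 + Lhalf) := by
    rw [← P_full, ← P_right, ← P_left,
      ← integral_Ioc_eq_integral_Ioo,
      ← intervalIntegral.integral_of_le (by norm_num : (0:ℝ) ≤ 1),
      ← integral_Ioc_eq_integral_Ioo,
      ← intervalIntegral.integral_of_le (by norm_num : (0:ℝ) ≤ 1/2),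
      ← integral_Ioc_eq_integral_Ioo,
      ← intervalIntegral.integral_of_le (by norm_num : (1/2:ℝ) ≤ 1)]
    exact (intervalIntegral.integral_add_adjacent_intervals int_left int_right).symm
  linarith

lemma integral_log_Ioo : ∫ x in Set.Ioo (0:ℝ) 1, Real.log x = -1 := by
  have h := integral_pow_neg_log 0 (by norm_num : (0:ℝ) < 1) le_rfl
  simp only [pow_zero, one_mul, pow_one, Real.log_one, neg_zero, mul_zero, zero_div,
    zero_add, Nat.cast_zero] at h
  norm_num at h
  have h2 : ∫ x in Set.Ioo (0:ℝ) 1, -Real.log x = 1 := h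
  have h3 := integral_neg (μ := volume.restrict (Set.Ioo (0:ℝ) 1)) (f := Real.log)
  rw [h3] at h2
  linarith

lemma integrableOn_g : IntegrableOn
    (fun x : ℝ => (-Real.log (1-x/2)) * (-Real.log x)) (Set.Ioo (0:ℝ) 1) := by
  have hb : IntegrableOn (fun x : ℝ => Real.log 2 * (-Real.log x)) (Set.Ioo (0:ℝ) 1) :=
    (integrableOn_log_Ioo.neg.const_mul (Real.log 2))
  apply hb.integrable.mono
  · exact (((Real.measurable_log.comp (measurable_const.sub
      (measurable_id.div_const 2))).neg).mul Real.measurable_log.neg).aestronglyMeasurable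
  · filter_upwards [ae_restrict_mem measurableSet_Ioo] with x hx
    have hx0 := hx.1
    have hx1 := hx.2
    have h1 : (1/2:ℝ) ≤ 1 - x/2 := by linarith
    have h2 : Real.log (1-x/2) ≤ 0 := Real.log_nonpos (by linarith) (by linarith)
    have h3 : -Real.log (1-x/2) ≤ Real.log 2 := by
      have := Real.log_le_log (by norm_num : (0:ℝ) < 1/2) h1
      rw [show (1/2:ℝ) = 2⁻¹ by norm_num, Real.log_inv] at this
      linarith
    have h4 : Real.log x ≤ 0 := Real.log_nonpos hx0.le hx1.le
    rw [Real.norm_of_nonneg (mul_nonneg (by linarith) (by linarith)),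
      Real.norm_of_nonneg (mul_nonneg (Real.log_nonneg (by norm_num)) (by linarith))]
    exact mul_le_mul_of_nonneg_right h3 (by linarith)

lemma integral_g : ∫ x in Set.Ioo (0:ℝ) 1, (-Real.log (1-x/2)) * (-Real.log x)
    = 2 - Real.log 2 - 2 * Lhalf := by
  have hval : ∀ n : ℕ, ∫ x in Set.Ioo (0:ℝ) 1,
      (1/2:ℝ)^(n+1)/((n:ℝ)+1) * (x^(n+1) * (-Real.log x))
      = (1/2:ℝ)^(n+1) / (((n:ℝ)+1) * ((n:ℝ)+2)^2) := by
    intro n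
    rw [integral_const_mul, integral_pow_neg_log (n+1) (by norm_num) le_rfl]
    push_cast
    simp only [Real.log_one, neg_zero, mul_zero, zero_mul, zero_div, one_pow, zero_add]
    have h1 : ((n:ℝ)+1) ≠ 0 := by positivity
    have h2 : ((n:ℝ)+2) ≠ 0 := by positivity
    field_simp
    ring
  have hnorm : ∀ n : ℕ, ∫ x in Set.Ioo (0:ℝ) 1,
      ‖(1/2:ℝ)^(n+1)/((n:ℝ)+1) * (x^(n+1) * (-Real.log x))‖
      = (1/2:ℝ)^(n+1) / (((n:ℝ)+1) * ((n:ℝ)+2)^2) := by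
    intro n
    rw [← hval n]
    apply setIntegral_congr_fun measurableSet_Ioo
    intro x hx
    have hlog : Real.log x ≤ 0 := Real.log_nonpos hx.1.le hx.2.le
    exact Real.norm_of_nonneg (mul_nonneg (by positivity)
      (mul_nonneg (pow_nonneg hx.1.le _) (by linarith)))
  have key := integral_tsum_of_summable_integral_norm
    (F := fun (n : ℕ) (x : ℝ) => (1/2:ℝ)^(n+1)/((n:ℝ)+1) * (x^(n+1) * (-Real.log x)))
    (μ := volume.restrict (Set.Ioo (0:ℝ) 1))
    (fun n => (integrableOn_pow_neg_log (n+1) (by norm_num) le_rfl).const_mul _)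
    (by rw [funext hnorm]; exact hasSum_S.summable)
  have hL : ∑' n : ℕ, ∫ x in Set.Ioo (0:ℝ) 1,
      (1/2:ℝ)^(n+1)/((n:ℝ)+1) * (x^(n+1) * (-Real.log x)) = 2 - Real.log 2 - 2 * Lhalf := by
    rw [funext hval]; exact hasSum_S.tsum_eq
  rw [← hL, key]
  apply setIntegral_congr_fun measurableSet_Ioo
  intro x hx
  have hs := (hasSum_pow_div_log_of_abs_lt_one (x := x/2)
    (by rw [abs_of_pos (by linarith [hx.1])]; linarith [hx.2])).mul_right (-Real.log x)
  have hf : (fun n : ℕ => (x/2)^(n+1)/((n:ℝ)+1) * (-Real.log x))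
      = fun n : ℕ => (1/2:ℝ)^(n+1)/((n:ℝ)+1) * (x^(n+1) * (-Real.log x)) := by
    funext n
    rw [show x/2 = x * (1/2) by ring, mul_pow]
    ring
  rw [hf] at hs
  exact hs.tsum_eq.symm

theorem integral_log_one_add_mul_log_one_sub :
    ∫ x in Set.Ioo (0 : ℝ) 1, Real.log (1 + x) * Real.log (1 - x)
      = (Real.log 2) ^ 2 - 2 * Real.log 2 + 2 - Real.pi ^ 2 / 6 := by
  have step1 : ∫ x in Set.Ioo (0 : ℝ) 1, Real.log (1 + x) * Real.log (1 - x)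
      = ∫ x in Set.Ioo (0 : ℝ) 1, Real.log (2 - x) * Real.log x := by
    have hcomp := intervalIntegral.integral_comp_sub_left (a := (0:ℝ)) (b := 1)
      (fun y : ℝ => Real.log (1+y) * Real.log (1-y)) 1
    rw [show (1:ℝ)-1 = 0 by norm_num, show (1:ℝ)-0 = 1 by norm_num] at hcomp
    rw [← integral_Ioc_eq_integral_Ioo,
      ← intervalIntegral.integral_of_le (by norm_num : (0:ℝ) ≤ 1), ← hcomp,
      intervalIntegral.integral_of_le (by norm_num : (0:ℝ) ≤ 1),
      integral_Ioc_eq_integral_Ioo]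
    apply setIntegral_congr_fun measurableSet_Ioo
    intro x _
    simp only [sub_sub_cancel]
    rw [show (1:ℝ)+(1-x) = 2-x by ring]
  have step2 : ∫ x in Set.Ioo (0 : ℝ) 1, Real.log (2 - x) * Real.log x
      = ∫ x in Set.Ioo (0 : ℝ) 1,
        (Real.log 2 * Real.log x + (-Real.log (1-x/2)) * (-Real.log x)) := by
    apply setIntegral_congr_fun measurableSet_Ioo
    intro x hx
    dsimp only
    have h1 : (2:ℝ) - x = 2 * (1 - x/2) := by ring
    rw [h1, Real.log_mul (by norm_num) (by intro h; nlinarith [hx.2])]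
    ring
  rw [step1, step2, integral_add ((integrableOn_log_Ioo.const_mul (Real.log 2))) integrableOn_g,
    integral_const_mul, integral_log_Ioo, integral_g, Lhalf_val]
  ring
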